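/- Let G be a connected finite graph and ω a 1-form on G. Then L(u,χ_ω) = z(u) (the Ihara zeta function) if and only if χ_ω(C) = 1 for every circuit C on G, which holds if and only if the character χ_ω restricted to H₁(G,ℤ) is trivial. -/

import Mathlib

/-- A finite (multi)graph, given by its set of vertices and its set of darts
(oriented edges): each unoriented edge corresponds to a pair `{d, inv d}` of darts. -/
structure Multigraph where
  V : Type
  D : Type
  fintypeV : Fintype V
  fintypeD : Fintype D
  decEqV : DecidableEq V
  decEqD : DecidableEq D
  inv : D → D
  inv_inv : ∀ d, inv (inv d) = d
  inv_ne : ∀ d, inv d ≠ d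
  head : D → V

instance (G : Multigraph) : Fintype G.V := G.fintypeV
instance (G : Multigraph) : Fintype G.D := G.fintypeD
instance (G : Multigraph) : DecidableEq G.V := G.decEqV
instance (G : Multigraph) : DecidableEq G.D := G.decEqD

namespace Multigraph

variable (G : Multigraph)

/-- The initial vertex `d(0)` of an oriented edge. -/
def tail (d : G.D) : G.V := G.head (G.inv d)

/-- Two vertices are adjacent if some oriented edge goes from one to the other. -/
def Adj (v w : G.V) : Prop := ∃ d : G.D, G.tail d = v ∧ G.head d = w

/-- The graph is connected. -/
def Connected : Prop := Nonempty G.V ∧ ∀ v w : G.V, Relation.ReflTransGen G.Adj v w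

/-- `ω` is a 1-form: it changes sign under reversal of orientation. -/
def IsOneForm (ω : G.D → ℝ) : Prop := ∀ d, ω (G.inv d) = - ω d

end Multigraph

namespace Multigraph

/-- A circuit: a closed walk without backtracks or tail, recorded as its
(nonempty) list of darts. -/
structure Circuit (G : Multigraph) where
  darts : List G.D
  ne : darts ≠ []
  chain : List.Chain' (fun a b => G.tail b = G.head a ∧ b ≠ G.inv a) darts
  closed : G.tail (darts.head ne) = G.head (darts.getLast ne)
  notail : darts.head ne ≠ G.inv (darts.getLast ne)

/-- The length `τ(C)` of a circuit. -/
def Circuit.len {G : Multigraph} (C : G.Circuit) : ℕ := C.darts.length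

/-- `χ_ω(C) = e^{2πi ω(C^{ab})}`, the character value of a circuit. -/
noncomputable def chiC (G : Multigraph) (ω : G.D → ℝ) (C : G.Circuit) : ℂ :=
  Complex.exp (2 * Real.pi * Complex.I * ((C.darts.map ω).sum : ℝ))

/-- A circuit is prime if it is not a proper power `D^k`, `k ≥ 2`, of a shorter
closed walk. -/
def Circuit.IsPrime {G : Multigraph} (C : G.Circuit) : Prop :=
  ¬ ∃ (l : List G.D) (k : ℕ), 2 ≤ k ∧ C.darts = (List.replicate k l).flatten

/-- Two circuits are equivalent (determine the same cycle) iff they differ by a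
rotation, i.e. by the choice of initial vertex. -/
def rotRel {G : Multigraph} (C C' : G.Circuit) : Prop :=
  ∃ n : ℕ, C'.darts = C.darts.rotate n

/-- Cycles: equivalence classes of circuits up to choice of initial vertex. -/
def Cyc (G : Multigraph) : Type := Quot (@rotRel G)

/-- A representative circuit of a cycle. -/
noncomputable def Cyc.out {G : Multigraph} (q : G.Cyc) : G.Circuit := Quot.out q

/-- The length `τ` of a cycle. -/
noncomputable def tauQ {G : Multigraph} (q : G.Cyc) : ℕ := q.out.len

/-- The character value `χ_ω` of a cycle. -/
noncomputable def chiQ {G : Multigraph} (ω : G.D → ℝ) (q : G.Cyc) : ℂ :=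
  chiC G ω q.out

/-- A cycle is prime if its circuits are prime. -/
def primeQ {G : Multigraph} (q : G.Cyc) : Prop := q.out.IsPrime

/-- The (primitive) period of a circuit: the least positive `k` with
`C.darts.rotate k = C.darts`. -/
def Circuit.period {G : Multigraph} (C : G.Circuit) : ℕ :=
  Nat.find (⟨C.darts.length,
    List.length_pos_iff.mpr C.ne, List.rotate_length C.darts⟩ :
    ∃ k, 0 < k ∧ C.darts.rotate k = C.darts)

/-- `r(C)`: the exponent in the prime decomposition `C = P^{r(C)}`. -/
noncomputable def rQ {G : Multigraph} (q : G.Cyc) : ℕ :=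
  q.out.len / q.out.period

end Multigraph

namespace Multigraph

/-- The L-function `L(u, χ_ω) = ∏_{[P]} (1 - χ_ω(P) u^{τ(P)})⁻¹` (product over all
prime cycles `[P]`) as a formal power series: its `l`-th coefficient equals the
`l`-th coefficient of the (finite) product over primes of length `≤ l`, since the
remaining factors only affect higher-order coefficients. -/
noncomputable def Lfun (G : Multigraph) (ω : G.D → ℝ) : PowerSeries ℂ :=
  PowerSeries.mk fun l =>
    PowerSeries.coeff l
      (∏ᶠ (q : G.Cyc) (_ : primeQ q ∧ tauQ q ≤ l),
        (1 - PowerSeries.C (chiQ ω q) * (PowerSeries.X : PowerSeries ℂ) ^ tauQ q)⁻¹)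

end Multigraph

namespace Multigraph

variable (G : Multigraph)

/-- The set of integral 1-cycles: `H₁(G,ℤ)`, realized as antisymmetric
integer-valued functions on darts with vanishing boundary at every vertex. -/
def H1set : Set (G.D → ℤ) :=
  {α | (∀ d, α (G.inv d) = - α d) ∧
    ∀ v : G.V, ∑ d ∈ Finset.univ.filter (fun d : G.D => G.head d = v), α d = 0}

/-- The pairing `ω(α)` between a 1-form `ω` and an integral 1-chain `α`. -/
noncomputable def pairingZ (ω : G.D → ℝ) (α : G.D → ℤ) : ℝ :=
  (1 / 2) * ∑ d : G.D, ω d * (α d : ℝ)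

end Multigraph

section Lists
variable {α β : Type*} [Fintype α] [DecidableEq α] [DecidableEq β]

lemma beq_ite_eq {M : Type*} (a d : α) (x y : M) :
    (if (a == d) = true then x else y) = if d = a then x else y := by
  rcases eq_or_ne d a with h|h
  · subst h; simp
  · simp [beq_iff_eq, h, Ne.symm h]

lemma sum_count_filter (l : List α) (p : α → Prop) [DecidablePred p] :
    ∑ d ∈ Finset.univ.filter p, l.count d = l.countP (fun d => decide (p d)) := by
  induction l with
  | nil => simp
  | cons a l ih =>
    simp only [List.count_cons, List.countP_cons, Finset.sum_add_distrib, ih]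
    congr 1
    rw [Finset.sum_congr rfl (g := fun d => if d = a then 1 else 0)
      (fun d _ => beq_ite_eq a d 1 0), Finset.sum_ite_eq']
    simp

omit [Fintype α] in
lemma count_map_eq_countP (l : List α) (f : α → β) (v : β) :
    (l.map f).count v = l.countP (fun d => decide (f d = v)) := by
  induction l with
  | nil => simp
  | cons a l ih => simp [List.count_cons, List.countP_cons, ih]

lemma sum_count_mul (l : List α) (g : α → ℝ) :
    ∑ d, (l.count d : ℝ) * g d = (l.map g).sum := by
  induction l with
  | nil => simp
  | cons a l ih =>
    simp only [List.count_cons, List.map_cons, List.sum_cons]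
    push_cast
    rw [Finset.sum_congr rfl (g := fun d => (l.count d : ℝ) * g d + (if d = a then g d else 0))
      (fun d _ => by rw [add_mul, beq_ite_eq a d (1:ℝ) 0]; rcases eq_or_ne d a with h|h <;> simp [h]),
      Finset.sum_add_distrib, ih, Finset.sum_ite_eq']
    simp [add_comm]
end Lists

namespace Multigraph
variable {G : Multigraph}

lemma chain_map_tail : ∀ (l : List G.D),
    List.Chain' (fun a b => G.tail b = G.head a ∧ b ≠ G.inv a) l →
    l.tail.map G.tail = (l.map G.head).dropLast := by
  intro l
  induction l with
  | nil => simp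
  | cons a l ih =>
    intro h
    cases l with
    | nil => simp
    | cons b t =>
      dsimp only [List.Chain'] at h; rw [List.isChain_cons_cons] at h
      have ih' := ih h.2
      simp only [List.tail_cons, List.map_cons] at ih' ⊢
      rw [List.dropLast_cons_of_ne_nil (by simp), ← ih', h.1.1]

lemma perm_map_tail_head (C : G.Circuit) :
    (C.darts.map G.tail).Perm (C.darts.map G.head) := by
  have hne : C.darts.map G.head ≠ [] := by
    simp [C.ne]
  have h1 : C.darts.map G.tail
      = (C.darts.map G.head).getLast hne :: (C.darts.map G.head).dropLast := by
    conv_lhs => rw [← List.cons_head_tail C.ne]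
    rw [List.map_cons, chain_map_tail _ C.chain, List.getLast_map, C.closed]
  rw [h1]
  exact (List.perm_append_singleton _ _).symm.trans
    (by rw [List.dropLast_append_getLast hne])

/-- the abelianization of a circuit -/
def abC (C : G.Circuit) : G.D → ℤ := fun d => (C.darts.count d : ℤ) - C.darts.count (G.inv d)

lemma abC_mem (C : G.Circuit) : abC C ∈ G.H1set := by
  constructor
  · intro d
    simp only [abC, G.inv_inv]
    ring
  · intro v
    have e1 : ∑ d ∈ Finset.univ.filter (fun d : G.D => G.head d = v), (C.darts.count d : ℤ)
        = (C.darts.countP (fun d => decide (G.head d = v)) : ℤ) := by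
      rw [← sum_count_filter]; push_cast; rfl
    have e2 : ∑ d ∈ Finset.univ.filter (fun d : G.D => G.head d = v),
        (C.darts.count (G.inv d) : ℤ)
        = (C.darts.countP (fun d => decide (G.tail d = v)) : ℤ) := by
      rw [Finset.sum_filter]
      rw [← Equiv.sum_comp (Function.Involutive.toPerm G.inv (@id (Function.Involutive G.inv) G.inv_inv))
        (fun d => if G.head d = v then (C.darts.count (G.inv d) : ℤ) else 0)]
      simp only [Function.Involutive.coe_toPerm, G.inv_inv]
      rw [← Finset.sum_filter]
      have : ∀ d : G.D, G.head (G.inv d) = v ↔ G.tail d = v := fun d => Iff.rfl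
      rw [Finset.filter_congr (fun d _ => this d), ← sum_count_filter]
      push_cast; rfl
    simp only [abC, Finset.sum_sub_distrib, e1, e2]
    have := (perm_map_tail_head C).count_eq v
    rw [count_map_eq_countP, count_map_eq_countP] at this
    rw [this]
    ring

lemma pairing_abC {ω : G.D → ℝ} (hω : G.IsOneForm ω) (C : G.Circuit) :
    G.pairingZ ω (abC C) = ((C.darts.map ω).sum : ℝ) := by
  have key : ∑ d : G.D, ω d * ((abC C d : ℤ) : ℝ)
      = 2 * ∑ d : G.D, (C.darts.count d : ℝ) * ω d := by
    have e2 : ∑ d : G.D, ω d * (C.darts.count (G.inv d) : ℝ)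
        = - ∑ d : G.D, (C.darts.count d : ℝ) * ω d := by
      rw [← Equiv.sum_comp (Function.Involutive.toPerm G.inv (@id (Function.Involutive G.inv) G.inv_inv))
        (fun d => ω d * (C.darts.count (G.inv d) : ℝ))]
      simp only [Function.Involutive.coe_toPerm, G.inv_inv]
      rw [← Finset.sum_neg_distrib]
      exact Finset.sum_congr rfl (fun d _ => by rw [hω d]; ring)
    have : ∀ d : G.D, ω d * ((abC C d : ℤ) : ℝ)
        = (C.darts.count d : ℝ) * ω d - ω d * (C.darts.count (G.inv d) : ℝ) := by
      intro d; simp only [abC]; push_cast; ring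
    rw [Finset.sum_congr rfl (fun d _ => this d), Finset.sum_sub_distrib, e2]
    ring
  rw [pairingZ, key, ← sum_count_mul]
  ring

end Multigraph
namespace Multigraph
variable {G : Multigraph}

/-- ω-sum of a cycle -/
noncomputable def sumOf (ω : G.D → ℝ) : G.Cyc → ℝ :=
  Quot.lift (fun C : G.Circuit => (C.darts.map ω).sum)
    (fun a b hab => by
      obtain ⟨n, hn⟩ := hab
      show (List.map ω a.darts).sum = (List.map ω b.darts).sum
      rw [hn]
      exact (((a.darts.rotate_perm n).map ω).sum_eq).symm)

/-- length of a cycle, as a lift -/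
def lenOf : G.Cyc → ℕ :=
  Quot.lift (fun C : G.Circuit => C.len)
    (fun a b hab => by
      obtain ⟨n, hn⟩ := hab
      show a.len = b.len
      simp [Circuit.len, hn])

lemma sumOf_out (ω : G.D → ℝ) (q : G.Cyc) : (q.out.darts.map ω).sum = sumOf ω q := by
  conv_rhs => rw [← Quot.out_eq q]
  rfl

lemma lenOf_out (q : G.Cyc) : q.out.len = lenOf q := by
  conv_rhs => rw [← Quot.out_eq q]
  rfl

lemma tauQ_eq_lenOf (q : G.Cyc) : tauQ q = lenOf q := lenOf_out q

lemma tauQ_mk (C : G.Circuit) : tauQ (Quot.mk _ C) = C.len := tauQ_eq_lenOf _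

lemma chiQ_eq_exp (ω : G.D → ℝ) (q : G.Cyc) :
    chiQ ω q = Complex.exp (2 * Real.pi * Complex.I * ((sumOf ω q : ℝ) : ℂ)) := by
  rw [chiQ, chiC, sumOf_out]

lemma chiC_eq_chiQ_mk (ω : G.D → ℝ) (C : G.Circuit) :
    chiC G ω C = chiQ ω (Quot.mk _ C) := by
  rw [chiC]
  exact (chiQ_eq_exp ω (Quot.mk rotRel C : G.Cyc)).symm

lemma abs_exp_two_pi (x : ℝ) :
    ‖Complex.exp (2 * Real.pi * Complex.I * (x : ℂ))‖ = 1 := by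
  rw [Complex.norm_exp]
  have : (2 * (Real.pi : ℂ) * Complex.I * (x : ℂ)).re = 0 := by
    simp [Complex.mul_re, Complex.mul_im]
  rw [this, Real.exp_zero]

lemma abs_chiQ (ω : G.D → ℝ) (q : G.Cyc) : ‖chiQ ω q‖ = 1 := by
  rw [chiQ_eq_exp]; exact abs_exp_two_pi _

lemma map_zero_sum (l : List G.D) : (l.map (0 : G.D → ℝ)).sum = 0 := by
  induction l with
  | nil => simp
  | cons a l ih => simpa using ih

lemma chiC_zero (C : G.Circuit) : chiC G 0 C = 1 := by
  rw [chiC, map_zero_sum]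
  simp

lemma chiQ_zero (q : G.Cyc) : chiQ (0 : G.D → ℝ) q = 1 := chiC_zero _

lemma darts_injective : Function.Injective (Circuit.darts (G := G)) := by
  rintro ⟨d1, n1, c1, cl1, t1⟩ ⟨d2, n2, c2, cl2, t2⟩ h
  cases h
  rfl

lemma cyc_set_finite (m : ℕ) : {q : G.Cyc | primeQ q ∧ tauQ q ≤ m}.Finite := by
  apply Set.Finite.of_finite_image (f := fun q => q.out.darts)
  · apply Set.Finite.subset (List.finite_length_le G.D m)
    rintro l ⟨q, hq, rfl⟩
    exact hq.2
  · intro q1 _ q2 _ h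
    have := darts_injective h
    rw [← Quot.out_eq q1, ← Quot.out_eq q2]
    exact congrArg _ this

lemma circuit_len_pos (C : G.Circuit) : 1 ≤ C.len :=
  List.length_pos_iff.mpr C.ne

end Multigraph
section PS
open PowerSeries

/-- basic facts about `(1 - c X^n)⁻¹` -/
lemma inv_factor_coeff (c : ℂ) (n : ℕ) (hn : 1 ≤ n) :
    PowerSeries.coeff 0 (1 - PowerSeries.C c * PowerSeries.X ^ n)⁻¹ = 1 ∧
    (∀ k, 0 < k → k < n → PowerSeries.coeff k (1 - PowerSeries.C c * PowerSeries.X ^ n)⁻¹ = 0) ∧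
    PowerSeries.coeff n (1 - PowerSeries.C c * PowerSeries.X ^ n)⁻¹ = c := by
  set g := (1 - PowerSeries.C c * PowerSeries.X ^ n)⁻¹ with hg
  have h0 : PowerSeries.constantCoeff (1 - PowerSeries.C c * PowerSeries.X ^ n) = 1 := by
    simp [zero_pow (by omega : n ≠ 0)]
  have hmul : (1 - PowerSeries.C c * PowerSeries.X ^ n) * g = 1 :=
    PowerSeries.mul_inv_cancel _ (by rw [h0]; exact one_ne_zero)
  have hrec : g = 1 + PowerSeries.C c * PowerSeries.X ^ n * g := by
    have := hmul
    rw [sub_mul, one_mul, sub_eq_iff_eq_add'] at this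
    linear_combination this
  have hc0 : PowerSeries.coeff 0 g = 1 := by
    rw [PowerSeries.coeff_zero_eq_constantCoeff, hg, PowerSeries.constantCoeff_inv, h0, inv_one]
  refine ⟨hc0, ?_, ?_⟩
  · intro k hk0 hkn
    conv_lhs => rw [hrec]
    rw [map_add, PowerSeries.coeff_one, if_neg (by omega), mul_assoc,
      PowerSeries.coeff_C_mul, mul_comm (PowerSeries.X ^ n), PowerSeries.coeff_mul_X_pow',
      if_neg (by omega)]
    ring
  · conv_lhs => rw [hrec]
    rw [map_add, PowerSeries.coeff_one, if_neg (by omega), mul_assoc,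
      PowerSeries.coeff_C_mul, mul_comm (PowerSeries.X ^ n), PowerSeries.coeff_mul_X_pow',
      if_pos (le_refl n)]
    simp [hc0]

lemma coeff_mul_special (A B : PowerSeries ℂ) (m : ℕ) (hm : 1 ≤ m)
    (hA0 : PowerSeries.coeff 0 A = 1) (hB0 : PowerSeries.coeff 0 B = 1)
    (hBk : ∀ k, 0 < k → k < m → PowerSeries.coeff k B = 0) :
    PowerSeries.coeff m (A * B) = PowerSeries.coeff m A + PowerSeries.coeff m B := by
  rw [PowerSeries.coeff_mul, Finset.Nat.sum_antidiagonal_eq_sum_range_succ_mk]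
  rw [← Finset.sum_subset (s₁ := ({0, m} : Finset ℕ))
    (by intro x hx; simp at hx; simp; omega)
    (by
      intro x hx hnx
      simp at hx hnx
      have h1 : 0 < x := by omega
      have h2 : x < m := by omega
      rw [hBk (m - x) (by omega) (by omega), mul_zero])]
  rw [Finset.sum_pair (by omega : (0:ℕ) ≠ m)]
  simp only [Nat.sub_zero, Nat.sub_self]
  rw [hA0, hB0]
  ring

lemma coeff_mul_vanish (A B : PowerSeries ℂ) (m k : ℕ) (hk0 : 0 < k) (hkm : k < m)
    (hAk : ∀ j, 0 < j → j < m → PowerSeries.coeff j A = 0)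
    (hBk : ∀ j, 0 < j → j < m → PowerSeries.coeff j B = 0) :
    PowerSeries.coeff k (A * B) = 0 := by
  rw [PowerSeries.coeff_mul, Finset.Nat.sum_antidiagonal_eq_sum_range_succ_mk]
  apply Finset.sum_eq_zero
  intro x hx
  simp at hx
  rcases Nat.eq_zero_or_pos x with h | h
  · subst h
    simp [hBk k hk0 hkm]
  · simp [hAk x h (by omega)]

lemma prod_inv_coeff {ι : Type*} (s : Finset ι) (c : ι → ℂ) (m : ℕ) (hm : 1 ≤ m) :
    PowerSeries.coeff 0 (∏ i ∈ s, (1 - PowerSeries.C (c i) * PowerSeries.X ^ m)⁻¹) = 1 ∧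
    (∀ k, 0 < k → k < m →
      PowerSeries.coeff k (∏ i ∈ s, (1 - PowerSeries.C (c i) * PowerSeries.X ^ m)⁻¹) = 0) ∧
    PowerSeries.coeff m (∏ i ∈ s, (1 - PowerSeries.C (c i) * PowerSeries.X ^ m)⁻¹)
      = ∑ i ∈ s, c i := by
  classical
  induction s using Finset.induction with
  | empty =>
    refine ⟨by simp, fun k hk0 hkm => ?_, ?_⟩ <;> simp [PowerSeries.coeff_one] <;> omega
  | @insert a s ha ih =>
    obtain ⟨f0, fk, fm⟩ := inv_factor_coeff (c a) m hm
    obtain ⟨p0, pk, pm⟩ := ih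
    rw [Finset.prod_insert ha, Finset.sum_insert ha]
    refine ⟨?_, ?_, ?_⟩
    · simp only [PowerSeries.coeff_zero_eq_constantCoeff] at f0 p0 ⊢
      rw [map_mul, f0, p0, one_mul]
    · intro k hk0 hkm
      exact coeff_mul_vanish _ _ m k hk0 hkm fk pk
    · rw [coeff_mul_special _ _ m hm f0 p0 pk, fm, pm]

end PS
lemma eq_one_of_sum_eq_card {ι : Type*} (s : Finset ι) (z : ι → ℂ)
    (habs : ∀ i ∈ s, ‖z i‖ = 1)
    (hsum : ∑ i ∈ s, z i = ∑ i ∈ s, (1 : ℂ)) :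
    ∀ i ∈ s, z i = 1 := by
  classical
  by_contra hc
  push_neg at hc
  obtain ⟨i0, hi0, hne⟩ := hc
  have hre : ∀ i ∈ s, (z i).re ≤ 1 := fun i hi =>
    le_trans (Complex.re_le_norm (z i)) (le_of_eq (habs i hi))
  have him : ∀ i ∈ s, (z i).re = 1 → z i = 1 := by
    intro i hi h1
    have habs2 := Complex.sq_norm (z i)
    rw [habs i hi] at habs2
    have : (z i).im = 0 := by
      have := Complex.normSq_apply (z i)
      nlinarith [Complex.normSq_apply (z i)]
    exact Complex.ext h1 this
  have hlt : (z i0).re < 1 := by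
    rcases lt_or_eq_of_le (hre i0 hi0) with h | h
    · exact h
    · exact absurd (him i0 hi0 h) hne
  have := Finset.sum_lt_sum (f := fun i => (z i).re) (g := fun _ => (1:ℝ))
    (fun i hi => hre i hi) ⟨i0, hi0, hlt⟩
  rw [← Complex.re_sum] at this
  simp [hsum] at this

namespace Multigraph
variable {G : Multigraph}

/-- If a circuit's dart list is a k-th power, the base is also a circuit and the
character value is the k-th power. -/
lemma decomp_circuit (C : G.Circuit) (l : List G.D) (k : ℕ) (hk : 2 ≤ k)
    (hdarts : C.darts = (List.replicate k l).flatten) (ω : G.D → ℝ) :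
    ∃ C' : G.Circuit, C'.darts = l ∧ C.len = k * C'.len ∧
      chiC G ω C = (chiC G ω C') ^ k := by
  have hlne : l ≠ [] := by
    rintro rfl
    apply C.ne
    rw [hdarts]
    simp
  obtain ⟨k', rfl⟩ : ∃ k', k = k' + 2 := ⟨k - 2, by omega⟩
  have hsplit : C.darts = l ++ (l ++ (List.replicate k' l).flatten) := by
    rw [hdarts, List.replicate_succ, List.replicate_succ, List.flatten_cons, List.flatten_cons]
  have hchain := C.chain
  rw [hsplit] at hchain; dsimp only [List.Chain'] at hchain; rw [List.isChain_append] at hchain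
  obtain ⟨hcl, hcrest, hjunc⟩ := hchain
  have hlne2 : l ++ (List.replicate k' l).flatten ≠ [] := by
    simp [hlne]
  have hR := hjunc (l.getLast hlne) (by simp [List.getLast?_eq_getLast hlne])
    ((l ++ (List.replicate k' l).flatten).head hlne2)
    (by simp [List.head?_eq_head hlne2])
  rw [List.head_append_of_ne_nil hlne] at hR
  refine ⟨⟨l, hlne, hcl, hR.1, hR.2⟩, rfl, ?_, ?_⟩
  · show C.len = (k' + 2) * l.length
    rw [Circuit.len, hdarts, List.length_flatten, List.map_replicate, List.sum_replicate,
      smul_eq_mul]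
  · have hs : (C.darts.map ω).sum = ((k' + 2 : ℕ) : ℝ) * (l.map ω).sum := by
      rw [hdarts, List.map_flatten, List.map_replicate, List.sum_flatten, List.map_replicate,
        List.sum_replicate, nsmul_eq_mul]
    show chiC G ω C = chiC G ω ⟨l, hlne, hcl, hR.1, hR.2⟩ ^ (k' + 2)
    rw [chiC, chiC, hs, ← Complex.exp_nat_mul]
    congr 1
    push_cast
    ring

end Multigraph
namespace Multigraph
variable {G : Multigraph}

lemma chi_one_of_L_eq {ω : G.D → ℝ} (hL : G.Lfun ω = G.Lfun 0) :
    ∀ C : G.Circuit, chiC G ω C = 1 := by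
  classical
  by_contra hc
  push_neg at hc
  obtain ⟨Cb, hCb⟩ := hc
  have hex : ∃ n, ∃ C : G.Circuit, C.len = n ∧ chiC G ω C ≠ 1 := ⟨Cb.len, Cb, rfl, hCb⟩
  set m := Nat.find hex with hm
  obtain ⟨C0, hC0len, hC0ne⟩ := Nat.find_spec hex
  have hm1 : 1 ≤ m := by rw [hm, ← hC0len]; exact circuit_len_pos C0
  have hsmall : ∀ C : G.Circuit, C.len < m → chiC G ω C = 1 := by
    intro C hC
    by_contra h
    exact Nat.find_min hex hC ⟨C, rfl, h⟩
  have hco := congrArg (PowerSeries.coeff m) hL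
  simp only [Lfun, PowerSeries.coeff_mk] at hco
  have hfin := cyc_set_finite (G := G) m
  have hconv : ∀ ω' : G.D → ℝ,
      (∏ᶠ (q : G.Cyc) (_ : primeQ q ∧ tauQ q ≤ m),
        (1 - PowerSeries.C (chiQ ω' q) * (PowerSeries.X : PowerSeries ℂ) ^ tauQ q)⁻¹)
      = ∏ q ∈ hfin.toFinset,
          (1 - PowerSeries.C (chiQ ω' q) * (PowerSeries.X : PowerSeries ℂ) ^ tauQ q)⁻¹ :=
    fun ω' => finprod_mem_eq_finite_toFinset_prod _ hfin
  rw [hconv ω, hconv 0] at hco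
  rw [← Finset.prod_filter_mul_prod_filter_not hfin.toFinset (fun q => tauQ q = m)
      (fun q => (1 - PowerSeries.C (chiQ ω q) * (PowerSeries.X : PowerSeries ℂ) ^ tauQ q)⁻¹),
    ← Finset.prod_filter_mul_prod_filter_not hfin.toFinset (fun q => tauQ q = m)
      (fun q => (1 - PowerSeries.C (chiQ (0 : G.D → ℝ) q) * (PowerSeries.X : PowerSeries ℂ) ^ tauQ q)⁻¹)]
    at hco
  set T2 := hfin.toFinset.filter (fun q => tauQ q = m) with hT2
  set T1 := hfin.toFinset.filter (fun q => ¬ tauQ q = m) with hT1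
  have htau1 : ∀ q : G.Cyc, 1 ≤ tauQ q := fun q => circuit_len_pos q.out
  -- the low-degree parts agree
  have hA : ∏ q ∈ T1, (1 - PowerSeries.C (chiQ ω q) * (PowerSeries.X : PowerSeries ℂ) ^ tauQ q)⁻¹
      = ∏ q ∈ T1, (1 - PowerSeries.C (chiQ (0 : G.D → ℝ) q) * (PowerSeries.X : PowerSeries ℂ) ^ tauQ q)⁻¹ := by
    refine Finset.prod_congr rfl (fun q hq => ?_)
    rw [hT1, Finset.mem_filter, Set.Finite.mem_toFinset] at hq
    have hlt : tauQ q < m := lt_of_le_of_ne hq.1.2 hq.2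
    have : chiQ ω q = 1 := hsmall q.out hlt
    rw [this, chiQ_zero]
  rw [← hA] at hco
  set A := ∏ q ∈ T1, (1 - PowerSeries.C (chiQ ω q) * (PowerSeries.X : PowerSeries ℂ) ^ tauQ q)⁻¹
    with hAdef
  have hA0 : PowerSeries.coeff 0 A = 1 := by
    rw [hAdef, PowerSeries.coeff_zero_eq_constantCoeff, map_prod]
    refine Finset.prod_eq_one (fun q hq => ?_)
    have := (inv_factor_coeff (chiQ ω q) (tauQ q) (htau1 q)).1
    rwa [PowerSeries.coeff_zero_eq_constantCoeff] at this
  have hBrw : ∀ ω' : G.D → ℝ,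
      ∏ q ∈ T2, (1 - PowerSeries.C (chiQ ω' q) * (PowerSeries.X : PowerSeries ℂ) ^ tauQ q)⁻¹
      = ∏ q ∈ T2, (1 - PowerSeries.C (chiQ ω' q) * (PowerSeries.X : PowerSeries ℂ) ^ m)⁻¹ := by
    intro ω'
    refine Finset.prod_congr rfl (fun q hq => ?_)
    rw [hT2, Finset.mem_filter] at hq
    rw [hq.2]
  rw [hBrw ω, hBrw 0] at hco
  obtain ⟨p0ω, pkω, pmω⟩ := prod_inv_coeff T2 (chiQ ω) m hm1
  obtain ⟨p00, pk0, pm0⟩ := prod_inv_coeff T2 (chiQ (0 : G.D → ℝ)) m hm1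
  rw [mul_comm _ A, mul_comm _ A, coeff_mul_special A _ m hm1 hA0 p0ω pkω,
    coeff_mul_special A _ m hm1 hA0 p00 pk0, pmω, pm0] at hco
  have hSum : ∑ q ∈ T2, chiQ ω q = ∑ q ∈ T2, (1 : ℂ) := by
    have : ∑ q ∈ T2, chiQ ω q = ∑ q ∈ T2, chiQ (0 : G.D → ℝ) q := by linear_combination hco
    rw [this]
    exact Finset.sum_congr rfl (fun q _ => chiQ_zero q)
  have hprime_m : ∀ q ∈ T2, chiQ ω q = 1 :=
    eq_one_of_sum_eq_card T2 (chiQ ω) (fun q _ => abs_chiQ ω q) hSum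
  -- conclude
  set q0 : G.Cyc := Quot.mk _ C0 with hq0
  have hτ : tauQ q0 = m := by rw [hq0, tauQ_mk, hC0len]
  have hchiq : chiC G ω C0 = chiQ ω q0 := chiC_eq_chiQ_mk ω C0
  by_cases hp : primeQ q0
  · have hmem : q0 ∈ T2 := by
      rw [hT2, Finset.mem_filter, Set.Finite.mem_toFinset]
      exact ⟨⟨hp, le_of_eq hτ⟩, hτ⟩
    exact hC0ne (hchiq.trans (hprime_m q0 hmem))
  · rw [primeQ, Circuit.IsPrime, not_not] at hp
    obtain ⟨l, k, hk, hd⟩ := hp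
    obtain ⟨C', _, hlen, hchi⟩ := decomp_circuit q0.out l k hk hd ω
    have hlenm : q0.out.len = m := hτ
    have h2L : 2 * C'.len ≤ k * C'.len := Nat.mul_le_mul_right _ hk
    have hC'lt : C'.len < m := by
      have := circuit_len_pos C'
      omega
    have hout : chiC G ω q0.out = 1 := by
      rw [hchi, hsmall C' hC'lt, one_pow]
    have : chiQ ω q0 = 1 := by
      rw [← Quot.out_eq q0, ← chiC_eq_chiQ_mk]
      exact hout
    exact hC0ne (hchiq.trans this)

end Multigraph
namespace Multigraph
variable {G : Multigraph}

lemma H1_sub {α β : G.D → ℤ} (hα : α ∈ G.H1set) (hβ : β ∈ G.H1set) :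
    α - β ∈ G.H1set := by
  refine ⟨fun d => ?_, fun v => ?_⟩
  · simp only [Pi.sub_apply, hα.1 d, hβ.1 d]; ring
  · simp only [Pi.sub_apply, Finset.sum_sub_distrib, hα.2 v, hβ.2 v, sub_zero]

lemma pairing_sub (ω : G.D → ℝ) (α β : G.D → ℤ) :
    G.pairingZ ω (α - β) = G.pairingZ ω α - G.pairingZ ω β := by
  simp only [pairingZ, Pi.sub_apply]
  rw [← mul_sub, ← Finset.sum_sub_distrib]
  congr 1
  refine Finset.sum_congr rfl (fun d _ => ?_)
  push_cast
  ring

lemma pairing_zero_fn (ω : G.D → ℝ) (α : G.D → ℤ) (h : ∀ d, α d = 0) :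
    G.pairingZ ω α = 0 := by
  rw [pairingZ, Finset.sum_eq_zero (fun d _ => by rw [h d]; simp)]
  ring

/-- extraction of a positive circuit from a nonzero 1-cycle -/
lemma exists_pos_circuit {α : G.D → ℤ} (hα : α ∈ G.H1set) (d0 : G.D) (hd0 : 0 < α d0) :
    ∃ C : G.Circuit, C.darts.Nodup ∧ ∀ d ∈ C.darts, 0 < α d := by
  classical
  -- the step function
  have step : ∀ d : {d : G.D // 0 < α d}, ∃ d' : {d : G.D // 0 < α d}, G.tail d'.1 = G.head d.1 := by
    rintro ⟨d, hd⟩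
    set v := G.head d with hv
    have hsum := hα.2 v
    have hneg : ∃ e ∈ Finset.univ.filter (fun e : G.D => G.head e = v), α e < 0 := by
      by_contra hcon
      push_neg at hcon
      have hall := (Finset.sum_eq_zero_iff_of_nonneg hcon).mp hsum
      have hdmem : d ∈ Finset.univ.filter (fun e : G.D => G.head e = v) := by
        simp [hv]
      have := hall d hdmem
      omega
    obtain ⟨e, hemem, heneg⟩ := hneg
    rw [Finset.mem_filter] at hemem
    refine ⟨⟨G.inv e, by rw [hα.1 e]; omega⟩, ?_⟩
    show G.head (G.inv (G.inv e)) = G.head d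
    rw [G.inv_inv, hemem.2]
  set stepf : {d : G.D // 0 < α d} → {d : G.D // 0 < α d} := fun d => (step d).choose with hstepf
  set f : ℕ → {d : G.D // 0 < α d} := fun n => stepf^[n] ⟨d0, hd0⟩ with hf
  have hstep : ∀ n, G.tail (f (n + 1)).1 = G.head (f n).1 := by
    intro n
    have : f (n + 1) = stepf (f n) := Function.iterate_succ_apply' stepf n _
    rw [this]
    exact (step (f n)).choose_spec
  -- pigeonhole
  have hpig : ∃ j : ℕ, ∃ i, i < j ∧ G.head (f i).1 = G.head (f j).1 := by
    obtain ⟨a, b, hab, heq⟩ := Fintype.exists_ne_map_eq_of_card_lt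
      (fun i : Fin (Fintype.card G.V + 1) => G.head (f i.1).1) (by simp)
    rcases lt_or_gt_of_ne hab with h | h
    · exact ⟨b.1, a.1, h, heq⟩
    · exact ⟨a.1, b.1, h, heq.symm⟩
  haveI : DecidablePred (fun j => ∃ i, i < j ∧ G.head (f i).1 = G.head (f j).1) :=
    fun _ => Classical.dec _
  set j := Nat.find hpig with hj
  obtain ⟨i, hij, hheads⟩ := Nat.find_spec hpig
  have hdistinct : ∀ p q, p < q → q < j → G.head (f p).1 ≠ G.head (f q).1 :=
    fun p q hpq hqj h => Nat.find_min hpig hqj ⟨p, hpq, h⟩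
  set n := j - i with hn
  have hn0 : 0 < n := by omega
  set g : Fin n → G.D := fun t => (f (i + 1 + t.1)).1 with hg
  have hlne : List.ofFn g ≠ [] := by
    rw [← List.length_pos_iff, List.length_ofFn]
    exact hn0
  have hmem : ∀ d ∈ List.ofFn g, 0 < α d := by
    intro d hd
    rw [List.mem_ofFn] at hd
    obtain ⟨t, ht⟩ := hd
    rw [← ht]
    exact (f (i + 1 + t.1)).2
  have hchain : List.Chain' (fun a b => G.tail b = G.head a ∧ b ≠ G.inv a) (List.ofFn g) := by
    dsimp only [List.Chain']; rw [List.isChain_iff_getElem]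
    intro t ht
    rw [List.length_ofFn] at ht
    simp only [List.getElem_ofFn]
    constructor
    · show G.tail (f (i + 1 + (t + 1))).1 = G.head (f (i + 1 + t)).1
      rw [show i + 1 + (t + 1) = (i + 1 + t) + 1 by omega]
      exact hstep _
    · show (f (i + 1 + (t + 1))).1 ≠ G.inv (f (i + 1 + t)).1
      intro heq
      have h1 := (f (i + 1 + (t + 1))).2
      rw [heq, hα.1] at h1
      have h2 := (f (i + 1 + t)).2
      omega
  have hheadl : (List.ofFn g).head hlne = (f (i + 1)).1 := by
    rw [List.head_ofFn]
    rfl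
  have hlastl : (List.ofFn g).getLast hlne = (f j).1 := by
    rw [List.getLast_ofFn]
    show (f (i + 1 + (n - 1))).1 = (f j).1
    rw [show i + 1 + (n - 1) = j by omega]
  have hclosed : G.tail ((List.ofFn g).head hlne) = G.head ((List.ofFn g).getLast hlne) := by
    rw [hheadl, hlastl, hstep i, hheads]
  have hnotail : (List.ofFn g).head hlne ≠ G.inv ((List.ofFn g).getLast hlne) := by
    rw [hheadl, hlastl]
    intro heq
    have h1 := (f (i + 1)).2
    rw [heq, hα.1] at h1
    have h2 := (f j).2
    omega
  have hinj : Function.Injective (fun t : Fin n => G.head (g t)) := by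
    have haux : ∀ t s : Fin n, t.1 < s.1 → G.head (g t) ≠ G.head (g s) := by
      intro t s hts h
      show False
      rcases eq_or_lt_of_le (show i + 1 + s.1 ≤ j by omega) with hq | hq
      · have h' : G.head (f (i + 1 + t.1)).1 = G.head (f (i + 1 + s.1)).1 := h
        rw [hq, ← hheads] at h'
        exact hdistinct i (i + 1 + t.1) (by omega) (by omega) h'.symm
      · exact hdistinct _ _ (by omega) hq h
    intro t s h
    rcases lt_trichotomy t.1 s.1 with hlt | heq | hgt
    · exact absurd h (haux t s hlt)
    · exact Fin.ext heq
    · exact absurd h.symm (haux s t hgt)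
  have hnodup : (List.ofFn g).Nodup := by
    have : ((List.ofFn g).map G.head).Nodup := by
      rw [List.map_ofFn]
      exact (List.nodup_ofFn ..).mpr hinj
    exact this.of_map _
  exact ⟨⟨List.ofFn g, hlne, hchain, hclosed, hnotail⟩, hnodup, hmem⟩

end Multigraph
namespace Multigraph
variable {G : Multigraph}

lemma exp_pairing_one_of_chi {ω : G.D → ℝ} (hω : G.IsOneForm ω)
    (hchi : ∀ C : G.Circuit, chiC G ω C = 1) :
    ∀ α ∈ G.H1set, Complex.exp (2 * Real.pi * Complex.I * ((G.pairingZ ω α : ℝ) : ℂ)) = 1 := by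
  classical
  suffices main : ∀ n : ℕ, ∀ α ∈ G.H1set, (∑ d : G.D, (α d).natAbs) ≤ n →
      Complex.exp (2 * Real.pi * Complex.I * ((G.pairingZ ω α : ℝ) : ℂ)) = 1 by
    exact fun α hα => main _ α hα le_rfl
  intro n
  induction n with
  | zero =>
    intro α hα hle
    have hzero : ∀ d, α d = 0 := by
      intro d
      have hsum : ∑ d : G.D, (α d).natAbs = 0 := Nat.le_zero.mp hle
      have := (Finset.sum_eq_zero_iff.mp hsum) d (Finset.mem_univ d)
      omega
    rw [pairing_zero_fn ω α hzero]
    simp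
  | succ n ih =>
    intro α hα hle
    by_cases h0 : ∀ d, α d = 0
    · rw [pairing_zero_fn ω α h0]
      simp
    · push_neg at h0
      obtain ⟨d1, hd1⟩ := h0
      have hd0 : ∃ d0, 0 < α d0 := by
        rcases lt_or_gt_of_ne hd1 with h | h
        · exact ⟨G.inv d1, by rw [hα.1]; omega⟩
        · exact ⟨d1, h⟩
      obtain ⟨d0, hd0⟩ := hd0
      obtain ⟨C, hnodup, hpos⟩ := exists_pos_circuit hα d0 hd0
      set β := abC C with hβ
      have hβH1 := abC_mem C
      have hsubH1 := H1_sub hα hβH1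
      have hinvnot : ∀ d ∈ C.darts, G.inv d ∉ C.darts := by
        intro d hd hcon
        have h1 := hpos d hd
        have h2 := hpos _ hcon
        rw [hα.1] at h2
        omega
      have hβval : ∀ d : G.D, (d ∈ C.darts → β d = 1) ∧
          (G.inv d ∈ C.darts → β d = -1) ∧ (d ∉ C.darts → G.inv d ∉ C.darts → β d = 0) := by
        intro d
        refine ⟨fun hd => ?_, fun hd => ?_, fun hd hd' => ?_⟩
        · rw [hβ]
          show (C.darts.count d : ℤ) - C.darts.count (G.inv d) = 1
          rw [List.count_eq_one_of_mem hnodup hd,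
            List.count_eq_zero_of_not_mem (hinvnot d hd)]
          ring
        · rw [hβ]
          show (C.darts.count d : ℤ) - C.darts.count (G.inv d) = -1
          have hdn : d ∉ C.darts := by
            intro hcon
            exact hinvnot d hcon hd
          rw [List.count_eq_one_of_mem hnodup hd, List.count_eq_zero_of_not_mem hdn]
          ring
        · rw [hβ]
          show (C.darts.count d : ℤ) - C.darts.count (G.inv d) = 0
          rw [List.count_eq_zero_of_not_mem hd, List.count_eq_zero_of_not_mem hd']
          ring
      have hpoint : ∀ d : G.D, ((α - β) d).natAbs ≤ (α d).natAbs := by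
        intro d
        rw [Pi.sub_apply]
        by_cases hd : d ∈ C.darts
        · have h1 := (hβval d).1 hd
          have h2 := hpos d hd
          omega
        · by_cases hd' : G.inv d ∈ C.darts
          · have h1 := (hβval d).2.1 hd'
            have h2 := hpos _ hd'
            rw [hα.1] at h2
            omega
          · have h1 := (hβval d).2.2 hd hd'
            omega
      have hstrict : ∑ d : G.D, ((α - β) d).natAbs < ∑ d : G.D, (α d).natAbs := by
        refine Finset.sum_lt_sum (fun d _ => hpoint d) ?_
        refine ⟨C.darts.head C.ne, Finset.mem_univ _, ?_⟩
        have hd : C.darts.head C.ne ∈ C.darts := List.head_mem C.ne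
        have h1 := (hβval _).1 hd
        have h2 := hpos _ hd
        rw [Pi.sub_apply, h1]
        omega
      have hIH := ih (α - β) hsubH1 (by omega)
      have hpair : G.pairingZ ω α = G.pairingZ ω (α - β) + G.pairingZ ω β := by
        rw [pairing_sub]
        ring
      rw [hpair, Complex.ofReal_add, mul_add, Complex.exp_add, hIH, one_mul,
        pairing_abC hω C]
      exact hchi C

end Multigraph
namespace Multigraph
variable {G : Multigraph}

lemma L_eq_of_chi {ω : G.D → ℝ} (hchi : ∀ C : G.Circuit, chiC G ω C = 1) :
    G.Lfun ω = G.Lfun 0 := by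
  have hfun : chiQ (G := G) ω = chiQ (0 : G.D → ℝ) :=
    funext fun q => (hchi q.out).trans (chiQ_zero q).symm
  unfold Lfun
  rw [hfun]

end Multigraph

open Multigraph

/-- `L(u,χ_ω)` equals the Ihara zeta function `z(u) = L(u,χ_0)` if
and only if `χ_ω(C) = 1` for every circuit `C`, if and only if the character `χ_ω`
is trivial on `H₁(G,ℤ)`. -/
theorem Lfunction_eq_zeta_iff (G : Multigraph) (hG : G.Connected)
    (ω : G.D → ℝ) (hω : G.IsOneForm ω) :
    (G.Lfun ω = G.Lfun 0 ↔ ∀ C : G.Circuit, chiC G ω C = 1) ∧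
    (G.Lfun ω = G.Lfun 0 ↔
      ∀ α ∈ G.H1set, Complex.exp (2 * Real.pi * Complex.I * (G.pairingZ ω α : ℝ)) = 1) := by
  have h1 : G.Lfun ω = G.Lfun 0 ↔ ∀ C : G.Circuit, chiC G ω C = 1 :=
    ⟨chi_one_of_L_eq, L_eq_of_chi⟩
  refine ⟨h1, h1.trans ⟨fun hchi => exp_pairing_one_of_chi hω hchi, fun hH1 C => ?_⟩⟩
  rw [chiC, ← pairing_abC hω C]
  exact hH1 _ (abC_mem C)
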